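/- Let C be a ternary [12,5] code satisfying conditions (C1), (C2), (C3) (as below), and let Pun(C) be its punctured code on the last two coordinates. If the minimum weight of Pun(C) is 4 or 5, then the minimum weight of C is at least 6. -/

import Mathlib

open Finset

/-- Hamming weight of a vector over `ZMod 3`. -/
def wt {n : ℕ} (v : Fin n → ZMod 3) : ℕ :=
  (Finset.univ.filter fun i => v i ≠ 0).card

/-- Projection of a length-12 vector onto its first 10 coordinates. -/
def punc (c : Fin 12 → ZMod 3) : Fin 10 → ZMod 3 :=
  fun i => c (Fin.castLE (by norm_num) i)

/-- The linear projection deleting the last two coordinates. -/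
def projL : (Fin 12 → ZMod 3) →ₗ[ZMod 3] (Fin 10 → ZMod 3) :=
  LinearMap.funLeft (ZMod 3) (ZMod 3) (Fin.castLE (by norm_num : (10:ℕ) ≤ 12))

/-- A set of vectors has minimum (nonzero) weight `d`. -/
def hasMinWt {n : ℕ} (S : Set (Fin n → ZMod 3)) (d : ℕ) : Prop :=
  (∃ w ∈ S, w ≠ 0 ∧ wt w = d) ∧ ∀ w ∈ S, w ≠ 0 → d ≤ wt w

lemma wt_split (c : Fin 12 → ZMod 3) :
    wt c = wt (punc c) + (if c 10 ≠ 0 then 1 else 0) + (if c 11 ≠ 0 then 1 else 0) := by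
  simp only [wt, Finset.card_filter, punc]
  rw [Fin.sum_univ_castSucc, Fin.sum_univ_castSucc]
  erw [Finset.card_filter]
  rfl

theorem stmt6 (C : Submodule (ZMod 3) (Fin 12 → ZMod 3))
    (hdim : Module.finrank (ZMod 3) C = 5)
    (hC1 : ∀ c ∈ C, ((wt (punc c) : ZMod 3) = c 10 * c 11))
    (hC2 : ∀ c ∈ C, c ≠ 0 → 3 ≤ wt (punc c))
    (hC3 : ∀ c ∈ C, wt (punc c) = 3 → ¬(c 10 = 0 ∧ c 11 = 0))
    (hmin : hasMinWt (C.map projL : Set (Fin 10 → ZMod 3)) 4 ∨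
            hasMinWt (C.map projL : Set (Fin 10 → ZMod 3)) 5) :
    ∀ c ∈ C, c ≠ 0 → 6 ≤ wt c := by
  intro c hc hc0
  have hw3 := hC2 c hc hc0
  have hpnz : punc c ≠ 0 := by
    intro h
    rw [h] at hw3
    simp [wt] at hw3
  have hmem : punc c ∈ (C.map projL : Set (Fin 10 → ZMod 3)) := ⟨c, hc, rfl⟩
  have hw4 : 4 ≤ wt (punc c) := by
    rcases hmin with ⟨_, h⟩ | ⟨_, h⟩
    · exact h _ hmem hpnz
    · exact le_trans (by norm_num) (h _ hmem hpnz)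
  by_cases h6 : 6 ≤ wt (punc c)
  · rw [wt_split c]; omega
  · have h1 := hC1 c hc
    have hne : c 10 * c 11 ≠ 0 := by
      rcases (by omega : wt (punc c) = 4 ∨ wt (punc c) = 5) with h | h <;>
        rw [h] at h1 <;> rw [← h1] <;> decide
    have h10 : c 10 ≠ 0 := left_ne_zero_of_mul hne
    have h11 : c 11 ≠ 0 := right_ne_zero_of_mul hne
    rw [wt_split c]
    rw [if_pos h10, if_pos h11]
    omega
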